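/- arXiv:1501.00216 — 2 statements merged into one kernel-verified Lean document; each statement's English description precedes it below -/
import Mathlib

section
/- Let a : Fin n → ℝ be nonnegative with S = Σ a i > 0, and let x : Fin n → {0,1} satisfy Σ x i ≤ n/2 and Σ a i · x i > 0. Then (4/S)·(Σ a i · x i) + 4·(Σ (1 − x i)) + S/(Σ a i · x i) − 1 ≥ 2n + 3, with equality if and only if Σ x i = n/2 and Σ a i · x i = S/2. -/
open Finset in
theorem stmt_1 (n : ℕ) (a x : Fin n → ℝ)
    (ha : ∀ i, 0 ≤ a i)
    (hx01 : ∀ i, x i = 0 ∨ x i = 1)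
    (hS : 0 < ∑ i, a i)
    (hcap : ∑ i, x i ≤ (n : ℝ) / 2)
    (hpos : 0 < ∑ i, a i * x i) :
    (2 * (n : ℝ) + 3 ≤
      (4 / ∑ i, a i) * (∑ i, a i * x i) + 4 * (∑ i, (1 - x i))
        + (∑ i, a i) / (∑ i, a i * x i) - 1) ∧
    ((4 / ∑ i, a i) * (∑ i, a i * x i) + 4 * (∑ i, (1 - x i))
        + (∑ i, a i) / (∑ i, a i * x i) - 1 = 2 * (n : ℝ) + 3 ↔
      (∑ i, x i = (n : ℝ) / 2 ∧ ∑ i, a i * x i = (∑ i, a i) / 2)) := by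
  set S := ∑ i, a i with hSdef
  set T := ∑ i, a i * x i with hTdef
  have hsum1 : ∑ i, (1 - x i) = (n : ℝ) - ∑ i, x i := by
    rw [Finset.sum_sub_distrib]
    simp
  have hST : 0 < S * T := mul_pos hS hpos
  have key : 4 / S * T + S / T - 4 = (2 * T - S) ^ 2 / (S * T) := by
    field_simp
    ring
  have hA : 0 ≤ (2 * T - S) ^ 2 / (S * T) := div_nonneg (sq_nonneg _) hST.le
  have hB : 2 * (n : ℝ) ≤ 4 * ((n : ℝ) - ∑ i, x i) := by linarith
  rw [hsum1]
  constructor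
  · linarith
  constructor
  · intro h
    have h1 : (2 * T - S) ^ 2 / (S * T) + (4 * ((n : ℝ) - ∑ i, x i) - 2 * n) = 0 := by
      rw [← key]; linarith
    have hA0 : (2 * T - S) ^ 2 / (S * T) = 0 := by linarith
    have hnum : (2 * T - S) ^ 2 = 0 := by
      rcases div_eq_zero_iff.mp hA0 with h' | h'
      · exact h'
      · exact absurd h' hST.ne'
    have hTS : 2 * T - S = 0 := by
      exact pow_eq_zero_iff (by norm_num) |>.mp hnum
    constructor
    · linarith
    · linarith
  · rintro ⟨hK, hT⟩
    have hTS : (2 * T - S) ^ 2 = 0 := by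
      rw [hT]; ring_nf
    rw [hTS, zero_div] at key
    rw [hK]
    linarith
end

section
/- A multiset A of positive integers admits a partition into two parts of equal sum if and only if the multiset A' obtained by adding |A| zeros to A admits a partition into two parts of equal sum and equal cardinality. -/
theorem stmt_2 (A : Multiset ℕ) (hA : ∀ a ∈ A, 0 < a) :
    (∃ B ≤ A, B.sum + B.sum = A.sum) ↔
      (∃ B ≤ A + Multiset.replicate (Multiset.card A) 0,
        B.sum + B.sum = (A + Multiset.replicate (Multiset.card A) 0).sum ∧
        Multiset.card B + Multiset.card B =
          Multiset.card (A + Multiset.replicate (Multiset.card A) 0)) := by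
  constructor
  · rintro ⟨B, hB, hsum⟩
    have hcard : Multiset.card B ≤ Multiset.card A := Multiset.card_le_card hB
    refine ⟨B + Multiset.replicate (Multiset.card A - Multiset.card B) 0, ?_, ?_, ?_⟩
    · exact add_le_add hB ((Multiset.replicate_le_replicate 0).mpr (Nat.sub_le _ _))
    · simp [Multiset.sum_replicate, hsum]
    · simp only [Multiset.card_add, Multiset.card_replicate]
      omega
  · rintro ⟨B, hB, hsum, hcard⟩
    refine ⟨B.filter (0 < ·), ?_, ?_⟩
    · calc B.filter (0 < ·) ≤ (A + Multiset.replicate (Multiset.card A) 0).filter (0 < ·) :=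
            Multiset.filter_le_filter _ hB
        _ = A := by
            rw [Multiset.filter_add, Multiset.filter_eq_self.mpr hA]
            rw [add_eq_left, Multiset.eq_zero_iff_forall_notMem]; intro x hx; have h0 := Multiset.of_mem_filter hx; have h1 := Multiset.eq_of_mem_replicate (Multiset.mem_of_mem_filter hx); omega
    · have h1 : (B.filter (0 < ·)).sum = B.sum := by
        conv_rhs => rw [← Multiset.filter_add_not (0 < ·) B]
        rw [Multiset.sum_add]
        have : (B.filter (fun a => ¬ 0 < a)).sum = 0 := by
          apply Multiset.sum_eq_zero
          intro x hx
          have := Multiset.of_mem_filter hx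
          omega
        omega
      rw [h1]
      simp [Multiset.sum_replicate] at hsum
      simpa using hsum
end
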